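/- For all r ≥ 1, all ζ > 0, all integers k ≥ 1, and all real t with |t| < ζ/3, taking ξ = −ζ one has max{ |q_k(t)|, |q_k(t) + r_k(t)| } ≤ (t²/2) κ̃₂ (|t|/ζ) ≤ (t²/4) κ̃₂. (Lemma 3.8.) -/

import Mathlib

open MeasureTheory Finset

noncomputable section

/-- ρ = r^{d/2} -/
def rho (d : ℕ) (r : ℝ) : ℝ := r ^ ((d : ℝ) / 2)

/-- tilted cumulant coefficients κ̃_n = d₁ ∫₀¹ e^{ξu/ρ} u^{n-1-d/γ} du -/
def kt (d : ℕ) (γ r ξ : ℝ) (n : ℕ) : ℝ :=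
  (2 - (d : ℝ) / γ) *
    ∫ u in (0:ℝ)..1, Real.exp (ξ * u / rho d r) * u ^ ((n : ℝ) - 1 - (d : ℝ) / γ)

/-- q_k(t) = ρ² ∑_{n=3}^{k+2} (it/ρ)^n κ̃_n/n! -/
def qk (d : ℕ) (γ r ξ : ℝ) (k : ℕ) (t : ℝ) : ℂ :=
  ((rho d r : ℝ) : ℂ) ^ 2 *
    ∑ n ∈ Finset.Icc 3 (k + 2),
      (Complex.I * (t : ℂ) / ((rho d r : ℝ) : ℂ)) ^ n *
        ((kt d γ r ξ n / (n.factorial : ℝ) : ℝ) : ℂ)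

/-- r_k(t) = ρ² ∑_{n=k+3}^∞ (it/ρ)^n κ̃_n/n! -/
def rk (d : ℕ) (γ r ξ : ℝ) (k : ℕ) (t : ℝ) : ℂ :=
  ((rho d r : ℝ) : ℂ) ^ 2 *
    ∑' n : ℕ,
      (Complex.I * (t : ℂ) / ((rho d r : ℝ) : ℂ)) ^ (n + (k + 3)) *
        ((kt d γ r ξ (n + (k + 3)) / ((n + (k + 3)).factorial : ℝ) : ℝ) : ℂ)

/- auxiliary lemmas -/

private lemma aux_nonneg (ξ ρ p : ℝ) :
    0 ≤ ∫ u in (0:ℝ)..1, Real.exp (ξ * u / ρ) * u ^ p := by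
  apply intervalIntegral.integral_nonneg (by norm_num)
  intro u hu
  exact mul_nonneg (Real.exp_nonneg _) (Real.rpow_nonneg hu.1 _)

private lemma aux_ibp (ζ ρ : ℝ) (hζ : 0 < ζ) (hρ : 0 < ρ) (p : ℝ) (hp : 1 ≤ p) :
    ∫ u in (0:ℝ)..1, Real.exp (-ζ * u / ρ) * u ^ p ≤
      p * ρ / ζ * ∫ u in (0:ℝ)..1, Real.exp (-ζ * u / ρ) * u ^ (p - 1) := by
  have hρ' : ρ ≠ 0 := ne_of_gt hρ
  have hζ' : ζ ≠ 0 := ne_of_gt hζ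
  have hu : ∀ x ∈ Set.uIcc (0:ℝ) 1, HasDerivAt (fun y : ℝ => y ^ p) (p * x ^ (p - 1)) x :=
    fun x _ => Real.hasDerivAt_rpow_const (Or.inr hp)
  have hv : ∀ x ∈ Set.uIcc (0:ℝ) 1,
      HasDerivAt (fun y : ℝ => -(ρ/ζ) * Real.exp (-ζ * y / ρ)) (Real.exp (-ζ * x / ρ)) x := by
    intro x _
    have h1 : HasDerivAt (fun y : ℝ => -ζ * y / ρ) (-ζ / ρ) x := by
      simpa using ((hasDerivAt_id x).const_mul (-ζ)).div_const ρ
    have h2 := (h1.exp).const_mul (-(ρ/ζ))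
    refine h2.congr_deriv ?_
    have hc : ρ/ζ*(ζ/ρ) = 1 := by rw [div_mul_div_comm, mul_comm ρ ζ, div_self (mul_ne_zero hζ' hρ')]
    linear_combination (Real.exp (-ζ * x / ρ)) * hc
  have hu' : IntervalIntegrable (fun x : ℝ => p * x ^ (p - 1)) volume 0 1 := by
    apply ContinuousOn.intervalIntegrable
    exact continuousOn_const.mul (continuousOn_id.rpow_const fun x _ => Or.inr (by linarith))
  have hv' : IntervalIntegrable (fun x : ℝ => Real.exp (-ζ * x / ρ)) volume 0 1 :=
    (((continuous_const.mul continuous_id).div_const ρ).rexp).intervalIntegrable 0 1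
  have hibp := intervalIntegral.integral_mul_deriv_eq_deriv_mul hu hv hu' hv'
  have h0p : (0:ℝ) ^ p = 0 := Real.zero_rpow (by positivity)
  have h1p : (1:ℝ) ^ p = 1 := Real.one_rpow p
  rw [h0p, h1p] at hibp
  have hl : (∫ x in (0:ℝ)..1, x ^ p * Real.exp (-ζ * x / ρ)) =
      ∫ x in (0:ℝ)..1, Real.exp (-ζ * x / ρ) * x ^ p := by
    apply intervalIntegral.integral_congr
    intro x _; ring
  have hr2 : (∫ x in (0:ℝ)..1, p * x ^ (p-1) * (-(ρ/ζ) * Real.exp (-ζ * x / ρ))) =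
      (p * -(ρ/ζ)) * ∫ x in (0:ℝ)..1, Real.exp (-ζ * x / ρ) * x ^ (p-1) := by
    rw [← intervalIntegral.integral_const_mul]
    apply intervalIntegral.integral_congr
    intro x _; ring
  rw [hl, hr2] at hibp
  have heq : (∫ x in (0:ℝ)..1, Real.exp (-ζ * x / ρ) * x ^ p) =
      -(ρ/ζ * Real.exp (-ζ * 1 / ρ)) +
        p * ρ / ζ * ∫ x in (0:ℝ)..1, Real.exp (-ζ * x / ρ) * x ^ (p-1) := by
    rw [hibp]; field_simp; ring
  rw [heq]
  have hE : 0 ≤ ρ/ζ * Real.exp (-ζ * 1 / ρ) := by positivity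
  linarith

private lemma kt_nonneg (d : ℕ) (γ r ξ : ℝ) (h2 : 0 ≤ 2 - (d:ℝ)/γ) (n : ℕ) :
    0 ≤ kt d γ r ξ n :=
  mul_nonneg h2 (aux_nonneg _ _ _)

private lemma kt_rec (d : ℕ) (γ r ζ : ℝ) (hζ : 0 < ζ) (hρ : 0 < rho d r)
    (h2 : 0 ≤ 2 - (d:ℝ)/γ) (hc0 : 0 ≤ (d:ℝ)/γ) (hc1 : (d:ℝ)/γ ≤ 1)
    (n : ℕ) (hn : 2 ≤ n) :
    kt d γ r (-ζ) (n+1) ≤ ((n:ℝ) * rho d r / ζ) * kt d γ r (-ζ) n := by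
  have hn' : (2:ℝ) ≤ (n:ℝ) := by exact_mod_cast hn
  have hp : 1 ≤ (n:ℝ) - (d:ℝ)/γ := by linarith
  unfold kt
  have hexp1 : ((n+1:ℕ):ℝ) - 1 - (d:ℝ)/γ = (n:ℝ) - (d:ℝ)/γ := by push_cast; ring
  have hexp2 : ((n:ℕ):ℝ) - 1 - (d:ℝ)/γ = ((n:ℝ) - (d:ℝ)/γ) - 1 := by ring
  rw [hexp1, hexp2]
  have hibp := aux_ibp ζ (rho d r) hζ hρ _ hp
  have hJ : 0 ≤ ∫ u in (0:ℝ)..1, Real.exp (-ζ * u / rho d r) * u ^ ((n:ℝ) - (d:ℝ)/γ - 1) :=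
    aux_nonneg _ _ _
  have hfrac : ((n:ℝ) - (d:ℝ)/γ) * rho d r / ζ ≤ (n:ℝ) * rho d r / ζ := by
    gcongr
    linarith
  calc (2 - (d:ℝ)/γ) * ∫ u in (0:ℝ)..1, Real.exp (-ζ * u / rho d r) * u ^ ((n:ℝ) - (d:ℝ)/γ)
      ≤ (2 - (d:ℝ)/γ) * (((n:ℝ) - (d:ℝ)/γ) * rho d r / ζ *
          ∫ u in (0:ℝ)..1, Real.exp (-ζ * u / rho d r) * u ^ ((n:ℝ) - (d:ℝ)/γ - 1)) :=
        mul_le_mul_of_nonneg_left hibp h2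
    _ ≤ (2 - (d:ℝ)/γ) * ((n:ℝ) * rho d r / ζ *
          ∫ u in (0:ℝ)..1, Real.exp (-ζ * u / rho d r) * u ^ ((n:ℝ) - (d:ℝ)/γ - 1)) := by
        apply mul_le_mul_of_nonneg_left _ h2
        exact mul_le_mul_of_nonneg_right hfrac hJ
    _ = ((n:ℝ) * rho d r / ζ) * ((2 - (d:ℝ)/γ) *
          ∫ u in (0:ℝ)..1, Real.exp (-ζ * u / rho d r) * u ^ ((n:ℝ) - (d:ℝ)/γ - 1)) := by ring

private lemma kt_pow (d : ℕ) (γ r ζ : ℝ) (hζ : 0 < ζ) (hρ : 0 < rho d r)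
    (h2 : 0 ≤ 2 - (d:ℝ)/γ) (hc0 : 0 ≤ (d:ℝ)/γ) (hc1 : (d:ℝ)/γ ≤ 1) :
    ∀ m : ℕ, kt d γ r (-ζ) (m+3) ≤
      ((m+2).factorial : ℝ) * (rho d r / ζ) ^ (m+1) * kt d γ r (-ζ) 2 := by
  intro m
  induction m with
  | zero =>
      have h := kt_rec d γ r ζ hζ hρ h2 hc0 hc1 2 le_rfl
      norm_num at h ⊢
      calc kt d γ r (-ζ) 3 ≤ 2 * rho d r / ζ * kt d γ r (-ζ) 2 := h
        _ = 2 * (rho d r / ζ) * kt d γ r (-ζ) 2 := by ring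
  | succ m ih =>
      have h := kt_rec d γ r ζ hζ hρ h2 hc0 hc1 (m+3) (by omega)
      have hcoef : 0 ≤ ((m+3:ℕ):ℝ) * rho d r / ζ := by positivity
      calc kt d γ r (-ζ) (m+1+3) = kt d γ r (-ζ) ((m+3)+1) := rfl
        _ ≤ (((m+3:ℕ)):ℝ) * rho d r / ζ * kt d γ r (-ζ) (m+3) := h
        _ ≤ ((m+3:ℕ):ℝ) * rho d r / ζ *
              (((m+2).factorial : ℝ) * (rho d r / ζ) ^ (m+1) * kt d γ r (-ζ) 2) :=
            mul_le_mul_of_nonneg_left ih hcoef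
        _ = ((m+1+2).factorial : ℝ) * (rho d r / ζ) ^ (m+1+1) * kt d γ r (-ζ) 2 := by
            have hft : (m+1+2).factorial = (m+3) * (m+2).factorial := by
              rw [show m+1+2 = m+3 by ring, show m+3 = (m+2)+1 by ring, Nat.factorial_succ]
            rw [hft]
            push_cast
            ring

set_option maxHeartbeats 1000000 in
/-- Lemma 3.8 (lower tail, ξ = −ζ): bound on q_k and q_k + r_k for |t| < ζ/3. -/
theorem qk_est_lower (d : ℕ) (hd : 1 ≤ d) (γ : ℝ) (hγ : (d : ℝ) < γ)
    (r : ℝ) (hr : 1 ≤ r) (ζ : ℝ) (hζ : 0 < ζ) (k : ℕ) (hk : 1 ≤ k)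
    (t : ℝ) (ht : |t| < ζ / 3) :
    max ‖qk d γ r (-ζ) k t‖
        ‖qk d γ r (-ζ) k t + rk d γ r (-ζ) k t‖ ≤
      t ^ 2 / 2 * kt d γ r (-ζ) 2 * (|t| / ζ) ∧
    t ^ 2 / 2 * kt d γ r (-ζ) 2 * (|t| / ζ) ≤ t ^ 2 / 4 * kt d γ r (-ζ) 2 := by
  have hd0 : (0:ℝ) < (d:ℝ) := by exact_mod_cast Nat.lt_of_lt_of_le Nat.zero_lt_one hd
  have hγ0 : (0:ℝ) < γ := lt_trans hd0 hγ
  have hc0 : 0 ≤ (d:ℝ)/γ := by positivity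
  have hc1 : (d:ℝ)/γ < 1 := (div_lt_one hγ0).2 hγ
  have h2 : 0 ≤ 2 - (d:ℝ)/γ := by linarith
  have hr0 : (0:ℝ) < r := lt_of_lt_of_le one_pos hr
  have hρ : 0 < rho d r := Real.rpow_pos_of_pos hr0 _
  have hρ' : rho d r ≠ 0 := ne_of_gt hρ
  have hζ' : ζ ≠ 0 := ne_of_gt hζ
  set ρ := rho d r with hρdef
  set x := |t| / ζ with hxdef
  have hx0 : 0 ≤ x := by positivity
  have hx1 : x < 1/3 := by
    rw [hxdef, div_lt_iff₀ hζ]; linarith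
  have hkt2 : 0 ≤ kt d γ r (-ζ) 2 := kt_nonneg d γ r (-ζ) h2 2
  set A : ℕ → ℝ := fun n => (|t| / ρ) ^ n * (kt d γ r (-ζ) n / (n.factorial : ℝ)) with hAdef
  have hA0 : ∀ n, 0 ≤ A n := by
    intro n
    apply mul_nonneg (by positivity)
    exact div_nonneg (kt_nonneg d γ r (-ζ) h2 n) (by positivity)
  -- termwise bound
  have hAbound : ∀ m : ℕ, ρ ^ 2 * A (m+3) ≤ t ^ 2 * kt d γ r (-ζ) 2 / 3 * x ^ (m+1) := by
    intro m
    have hkp := kt_pow d γ r ζ hζ hρ h2 hc0 hc1.le m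
    have hfac : (0:ℝ) < ((m+3).factorial : ℝ) := by positivity
    have hfac2 : ((m+2).factorial : ℝ) ≠ 0 := by positivity
    have hm3 : ((m:ℝ)+3) ≠ 0 := by positivity
    have step1 : ρ ^ 2 * A (m+3) ≤
        ρ ^ 2 * ((|t|/ρ) ^ (m+3) *
          ((((m+2).factorial : ℝ) * (ρ/ζ) ^ (m+1) * kt d γ r (-ζ) 2) / ((m+3).factorial : ℝ))) := by
      apply mul_le_mul_of_nonneg_left _ (by positivity)
      apply mul_le_mul_of_nonneg_left _ (by positivity)
      exact div_le_div_of_nonneg_right hkp hfac.le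
    have key : ρ ^ 2 * ((|t|/ρ) ^ (m+3) *
          ((((m+2).factorial : ℝ) * (ρ/ζ) ^ (m+1) * kt d γ r (-ζ) 2) / ((m+3).factorial : ℝ))) =
        t ^ 2 * kt d γ r (-ζ) 2 / ((m:ℝ)+3) * x ^ (m+1) := by
      have hfs : ((m+3).factorial : ℝ) = ((m:ℝ)+3) * ((m+2).factorial : ℝ) := by
        rw [show m+3 = (m+2)+1 by ring, Nat.factorial_succ]
        push_cast; ring
      have hsplit : (|t|/ρ) ^ (m+3) = (|t|/ρ) ^ 2 * (|t|/ρ) ^ (m+1) := by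
        rw [← pow_add]; congr 1; ring
      have hmix : x ^ (m+1) = (|t|/ρ) ^ (m+1) * (ρ/ζ) ^ (m+1) := by
        rw [← mul_pow, hxdef]
        congr 1
        field_simp
      rw [hfs, hsplit, hmix, ← sq_abs t]
      field_simp
    have last : t ^ 2 * kt d γ r (-ζ) 2 / ((m:ℝ)+3) * x ^ (m+1) ≤
        t ^ 2 * kt d γ r (-ζ) 2 / 3 * x ^ (m+1) := by
      apply mul_le_mul_of_nonneg_right _ (by positivity)
      have hm0 : (0:ℝ) ≤ (m:ℝ) := Nat.cast_nonneg m
      have htk : 0 ≤ t ^ 2 * kt d γ r (-ζ) 2 := mul_nonneg (sq_nonneg t) hkt2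
      gcongr
      linarith
    calc ρ ^ 2 * A (m+3) ≤ _ := step1
      _ = t ^ 2 * kt d γ r (-ζ) 2 / ((m:ℝ)+3) * x ^ (m+1) := key
      _ ≤ _ := last
    -- geometric series facts
  have hxlt1 : x < 1 := by linarith
  have hgeo0 : Summable (fun m : ℕ => x ^ m) := summable_geometric_of_lt_one hx0 hxlt1
  have hgeo : Summable (fun m : ℕ => x ^ (m+1)) := (summable_nat_add_iff 1).2 hgeo0
  have htsum_geo : ∑' m : ℕ, x ^ (m+1) = x * (1-x)⁻¹ := by
    calc ∑' m : ℕ, x ^ (m+1) = ∑' m : ℕ, x * x ^ m := by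
          apply tsum_congr; intro m; rw [pow_succ]; ring
      _ = x * ∑' m : ℕ, x ^ m := tsum_mul_left
      _ = x * (1-x)⁻¹ := by rw [tsum_geometric_of_lt_one hx0 hxlt1]
  -- summability of A shifted
  have hρ2 : (0:ℝ) < ρ ^ 2 := by positivity
  have hAsum : Summable (fun m : ℕ => A (m+3)) := by
    apply Summable.of_nonneg_of_le (fun m => hA0 _) (fun m => ?_)
      (hgeo.mul_left (t ^ 2 * kt d γ r (-ζ) 2 / 3 / ρ ^ 2))
    have h := hAbound m
    calc A (m+3) = (ρ ^ 2 * A (m+3)) / ρ ^ 2 := by field_simp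
      _ ≤ (t ^ 2 * kt d γ r (-ζ) 2 / 3 * x ^ (m+1)) / ρ ^ 2 := by gcongr
      _ = t ^ 2 * kt d γ r (-ζ) 2 / 3 / ρ ^ 2 * x ^ (m+1) := by ring
  have hAfull : Summable A := (summable_nat_add_iff 3).1 hAsum
  -- the master bound
  have hBsum : ρ ^ 2 * ∑' m : ℕ, A (m+3) ≤ t ^ 2 / 2 * kt d γ r (-ζ) 2 * x := by
    rw [← tsum_mul_left]
    have h1 : ∑' m : ℕ, ρ ^ 2 * A (m+3) ≤ ∑' m : ℕ, t ^ 2 * kt d γ r (-ζ) 2 / 3 * x ^ (m+1) :=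
      Summable.tsum_le_tsum (fun m => hAbound m) (hAsum.mul_left _) (hgeo.mul_left _)
    have h2 : ∑' m : ℕ, t ^ 2 * kt d γ r (-ζ) 2 / 3 * x ^ (m+1) =
        t ^ 2 * kt d γ r (-ζ) 2 / 3 * (x * (1-x)⁻¹) := by
      rw [tsum_mul_left, htsum_geo]
    rw [h2] at h1
    have h3 : (0:ℝ) < 1 - x := by linarith
    have hy : (1-x)⁻¹ ≤ 3/2 := by
      rw [show (3:ℝ)/2 = (2/3 : ℝ)⁻¹ by norm_num]
      exact inv_anti₀ (by norm_num) (by linarith)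
    have hy0 : (0:ℝ) ≤ (1-x)⁻¹ := by positivity
    have htkx : 0 ≤ t ^ 2 * kt d γ r (-ζ) 2 * x :=
      mul_nonneg (mul_nonneg (sq_nonneg t) hkt2) hx0
    nlinarith [mul_nonneg htkx (by linarith : (0:ℝ) ≤ 3/2 - (1-x)⁻¹)]
  -- absolute value of individual terms
  have habs_term : ∀ n : ℕ,
      ‖(Complex.I * (t:ℂ) / ((ρ:ℝ):ℂ)) ^ n *
        ((kt d γ r (-ζ) n / (n.factorial : ℝ) : ℝ) : ℂ)‖ = A n := by
    intro n
    simp only [norm_mul, norm_pow, norm_div, Complex.norm_I, Complex.norm_real, Real.norm_eq_abs, one_mul]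
    rw [abs_of_pos hρ, abs_of_nonneg (kt_nonneg d γ r (-ζ) h2 n), Nat.abs_cast]
  -- reindexing of the finite sum
  have hreindex : ∑ n ∈ Finset.Icc 3 (k+2), A n = ∑ i ∈ Finset.range k, A (i+3) := by
    rw [show Finset.Icc 3 (k+2) = Finset.Ico 3 (k+3) from (Finset.Ico_add_one_right_eq_Icc 3 (k+2)),
      Finset.sum_Ico_eq_sum_range]
    simp [add_comm]
  -- bound on qk
  have hq : ‖qk d γ r (-ζ) k t‖ ≤ ρ ^ 2 * ∑ i ∈ Finset.range k, A (i+3) := by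
    unfold qk
    rw [norm_mul, norm_pow, Complex.norm_real, Real.norm_eq_abs, abs_of_pos hρ]
    apply mul_le_mul_of_nonneg_left _ (by positivity)
    calc ‖∑ n ∈ Finset.Icc 3 (k+2), (Complex.I * (t:ℂ) / ((ρ:ℝ):ℂ)) ^ n *
            ((kt d γ r (-ζ) n / (n.factorial : ℝ) : ℝ) : ℂ)‖
        ≤ ∑ n ∈ Finset.Icc 3 (k+2), ‖(Complex.I * (t:ℂ) / ((ρ:ℝ):ℂ)) ^ n *
            ((kt d γ r (-ζ) n / (n.factorial : ℝ) : ℝ) : ℂ)‖ := norm_sum_le _ _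
      _ = ∑ n ∈ Finset.Icc 3 (k+2), A n := Finset.sum_congr rfl (fun n _ => habs_term n)
      _ = ∑ i ∈ Finset.range k, A (i+3) := hreindex
  -- bound on rk
  have hAshift : Summable (fun m : ℕ => A (m + (k+3))) := (summable_nat_add_iff (k+3)).2 hAfull
  have hrk : ‖rk d γ r (-ζ) k t‖ ≤ ρ ^ 2 * ∑' m : ℕ, A (m + (k+3)) := by
    unfold rk
    rw [norm_mul, norm_pow, Complex.norm_real, Real.norm_eq_abs, abs_of_pos hρ]
    apply mul_le_mul_of_nonneg_left _ (by positivity)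
    have hsn : Summable (fun n : ℕ => ‖(Complex.I * (t:ℂ) / ((ρ:ℝ):ℂ)) ^ (n + (k+3)) *
        ((kt d γ r (-ζ) (n + (k+3)) / ((n + (k+3)).factorial : ℝ) : ℝ) : ℂ)‖) := by
      apply hAshift.congr
      intro n
      rw [← habs_term (n + (k+3))]
    calc ‖∑' n : ℕ, (Complex.I * (t:ℂ) / ((ρ:ℝ):ℂ)) ^ (n + (k+3)) *
            ((kt d γ r (-ζ) (n + (k+3)) / ((n + (k+3)).factorial : ℝ) : ℝ) : ℂ)‖
        = ‖∑' n : ℕ, (Complex.I * (t:ℂ) / ((ρ:ℝ):ℂ)) ^ (n + (k+3)) *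
            ((kt d γ r (-ζ) (n + (k+3)) / ((n + (k+3)).factorial : ℝ) : ℝ) : ℂ)‖ :=
          rfl
      _ ≤ ∑' n : ℕ, ‖(Complex.I * (t:ℂ) / ((ρ:ℝ):ℂ)) ^ (n + (k+3)) *
            ((kt d γ r (-ζ) (n + (k+3)) / ((n + (k+3)).factorial : ℝ) : ℝ) : ℂ)‖ :=
          norm_tsum_le_tsum_norm hsn
      _ = ∑' n : ℕ, A (n + (k+3)) := by
          apply tsum_congr
          intro n
          rw [habs_term]
  -- splitting identity
  have hsplit : (∑ i ∈ Finset.range k, A (i+3)) + ∑' m : ℕ, A (m + (k+3)) =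
      ∑' m : ℕ, A (m+3) := by
    have h := Summable.sum_add_tsum_nat_add (f := fun m => A (m+3)) k hAsum
    calc (∑ i ∈ Finset.range k, A (i+3)) + ∑' m : ℕ, A (m + (k+3))
        = (∑ i ∈ Finset.range k, A (i+3)) + ∑' m : ℕ, A ((m+k)+3) := rfl
      _ = ∑' m : ℕ, A (m+3) := h
  have hfin_le : ∑ i ∈ Finset.range k, A (i+3) ≤ ∑' m : ℕ, A (m+3) :=
    Summable.sum_le_tsum (Finset.range k) (fun i _ => hA0 _) hAsum
  have hmax1 : ‖qk d γ r (-ζ) k t‖ ≤ t ^ 2 / 2 * kt d γ r (-ζ) 2 * x := by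
    calc ‖qk d γ r (-ζ) k t‖ ≤ ρ ^ 2 * ∑ i ∈ Finset.range k, A (i+3) := hq
      _ ≤ ρ ^ 2 * ∑' m : ℕ, A (m+3) := mul_le_mul_of_nonneg_left hfin_le (by positivity)
      _ ≤ t ^ 2 / 2 * kt d γ r (-ζ) 2 * x := hBsum
  have hmax2 : ‖qk d γ r (-ζ) k t + rk d γ r (-ζ) k t‖ ≤
      t ^ 2 / 2 * kt d γ r (-ζ) 2 * x := by
    calc ‖qk d γ r (-ζ) k t + rk d γ r (-ζ) k t‖
        ≤ ‖qk d γ r (-ζ) k t‖ + ‖rk d γ r (-ζ) k t‖ :=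
          norm_add_le _ _
      _ ≤ ρ ^ 2 * (∑ i ∈ Finset.range k, A (i+3)) + ρ ^ 2 * ∑' m : ℕ, A (m + (k+3)) :=
          add_le_add hq hrk
      _ = ρ ^ 2 * ((∑ i ∈ Finset.range k, A (i+3)) + ∑' m : ℕ, A (m + (k+3))) := by ring
      _ = ρ ^ 2 * ∑' m : ℕ, A (m+3) := by rw [hsplit]
      _ ≤ t ^ 2 / 2 * kt d γ r (-ζ) 2 * x := hBsum
  refine ⟨max_le hmax1 hmax2, ?_⟩
  have htk : 0 ≤ t ^ 2 * kt d γ r (-ζ) 2 := mul_nonneg (sq_nonneg t) hkt2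
  nlinarith [mul_nonneg htk (by linarith : (0:ℝ) ≤ 1/2 - x)]
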